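/- arXiv:1211.5309 — 2 statements merged into one kernel-verified Lean document; each statement's English description precedes it below -/
import Mathlib

section
/- Let (S_n) be a random walk on ℝ with i.i.d. increments, S_0 = x under P_x, and let ρ(n) := P_0(min_{0≤i≤n} S_i ≥ 0). Then for every x ≥ 0 and n ≥ 1: P_x(min_{0≤i≤n} S_i ≥ 0) = ρ(n) + ∑_{k=1}^n P_x(min_{0≤j≤k−1} S_j > S_k ≥ 0) · ρ(n−k). -/
open MeasureTheory Finset
open scoped ENNReal

lemma aux_map_pi {Ω : Type*} [MeasurableSpace Ω] (μ : Measure Ω) [IsProbabilityMeasure μ]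
    (X : ℕ → Ω → ℝ) (hmeas : ∀ i, Measurable (X i))
    (hindep : ProbabilityTheory.iIndepFun (m := fun _ => Real.measurableSpace) X μ)
    (hident : ∀ i, ProbabilityTheory.IdentDistrib (X i) (X 0) μ μ)
    (m k : ℕ) :
    μ.map (fun ω (i : Fin m) => X (k + i) ω) = Measure.pi (fun _ : Fin m => μ.map (X 0)) := by
  classical
  have hV : Measurable (fun ω (i : Fin m) => X (k + i) ω) :=
    measurable_pi_lambda _ fun i => hmeas _
  symm
  refine Measure.pi_eq fun s hs => ?_
  set sets : ℕ → Set ℝ := fun j => if h : k ≤ j ∧ j < k + m then s ⟨j - k, by omega⟩ else Set.univ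
    with hsets
  have hsets_meas : ∀ j ∈ Finset.Ico k (k + m), MeasurableSet (sets j) := by
    intro j _
    by_cases h : k ≤ j ∧ j < k + m
    · simp only [hsets, dif_pos h]; exact hs _
    · simp only [hsets, dif_neg h]; exact MeasurableSet.univ
  have hset_eq : ∀ (i : Fin m), sets (k + i) = s i := by
    intro i
    have h : k ≤ k + (i : ℕ) ∧ k + (i : ℕ) < k + m := by omega
    simp only [hsets, dif_pos h]
    ext
    simp
  have h1 : (fun ω (i : Fin m) => X (k + i) ω) ⁻¹' Set.pi Set.univ s
      = ⋂ j ∈ Finset.Ico k (k + m), X j ⁻¹' sets j := by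
    ext ω
    simp only [Set.mem_preimage, Set.mem_pi, Set.mem_univ, forall_true_left, Set.mem_iInter,
      Finset.mem_Ico]
    constructor
    · rintro h j ⟨hj1, hj2⟩
      have hlt : j - k < m := by omega
      have := h ⟨j - k, hlt⟩
      rw [← hset_eq ⟨j - k, hlt⟩] at this
      have e : k + (j - k) = j := by omega
      simpa [e] using this
    · intro h i
      have := h (k + i) ⟨by omega, by omega⟩
      rwa [hset_eq i] at this
  rw [Measure.map_apply hV (MeasurableSet.univ_pi hs), h1,
    hindep.measure_inter_preimage_eq_mul _ hsets_meas]
  have h2 : ∀ j ∈ Finset.Ico k (k + m), μ (X j ⁻¹' sets j) = μ.map (X 0) (sets j) := by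
    intro j hj
    rw [← (hident j).map_eq, Measure.map_apply (hmeas j) (hsets_meas j hj)]
  rw [Finset.prod_congr rfl h2, Finset.prod_Ico_eq_prod_range]
  have h3 : k + m - k = m := by omega
  rw [h3, ← Fin.prod_univ_eq_prod_range (fun i => μ.map (X 0) (sets (k + i))) m]
  exact Finset.prod_congr rfl fun i _ => by rw [hset_eq i]

/-- First-minimum decomposition for a random walk with i.i.d. increments `X`,
`S_x(n) = x + ∑_{i<n} X i`: for `x ≥ 0` and `n ≥ 1`, writing
`ρ(n) := P(min_{0≤i≤n} S_0(i) ≥ 0)`,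
`P_x(min_{0≤i≤n} S_i ≥ 0) = ρ(n) + ∑_{k=1}^n P_x(min_{0≤j≤k-1} S_j > S_k ≥ 0) ρ(n-k)`. -/
theorem stmt6 {Ω : Type*} [MeasurableSpace Ω] (μ : Measure Ω) [IsProbabilityMeasure μ]
    (X : ℕ → Ω → ℝ) (hmeas : ∀ i, Measurable (X i))
    (hindep : ProbabilityTheory.iIndepFun (m := fun _ => Real.measurableSpace) X μ)
    (hident : ∀ i, ProbabilityTheory.IdentDistrib (X i) (X 0) μ μ)
    (S : ℝ → ℕ → Ω → ℝ) (hS : ∀ x n ω, S x n ω = x + ∑ i ∈ Finset.range n, X i ω)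
    (ρ : ℕ → ℝ≥0∞) (hρ : ∀ n, ρ n = μ {ω | ∀ i ≤ n, 0 ≤ S 0 i ω})
    (x : ℝ) (hx : 0 ≤ x) (n : ℕ) (hn : 1 ≤ n) :
    μ {ω | ∀ i ≤ n, 0 ≤ S x i ω} =
      ρ n + ∑ k ∈ Finset.Icc 1 n,
        μ {ω | (∀ j < k, S x k ω < S x j ω) ∧ 0 ≤ S x k ω} * ρ (n - k) := by
  classical
  -- basic facts about S
  have hSfun : ∀ y k, S y k = fun ω => y + ∑ i ∈ Finset.range k, X i ω :=
    fun y k => funext fun ω => hS y k ω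
  have hSmeas : ∀ y k, Measurable (S y k) := by
    intro y k
    rw [hSfun]
    exact measurable_const.add (Finset.measurable_sum _ fun i _ => hmeas i)
  have hS0 : ∀ ω, S x 0 ω = x := by intro ω; rw [hS]; simp
  -- definitions
  set B : ℕ → Set Ω := fun k => {ω | (∀ j < k, S x k ω < S x j ω) ∧ 0 ≤ S x k ω} with hB
  set C : ℕ → Set Ω := fun k => {ω | ∀ j, k ≤ j → j ≤ n → S x k ω ≤ S x j ω} with hC
  set D : ℕ → Set Ω := fun k => B k ∩ C k with hD
  have hmemD : ∀ k ω, ω ∈ D k ↔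
      (∀ j < k, S x k ω < S x j ω) ∧ 0 ≤ S x k ω ∧ ∀ j, k ≤ j → j ≤ n → S x k ω ≤ S x j ω := by
    intro k ω
    simp only [hD, hB, hC, Set.mem_inter_iff, Set.mem_setOf_eq]
    tauto
  have hBmeas : ∀ k, MeasurableSet (B k) := by
    intro k
    have : B k = (⋂ j, ⋂ _ : j < k, {ω | S x k ω < S x j ω}) ∩ {ω | 0 ≤ S x k ω} := by
      ext ω; simp [hB]
    rw [this]
    exact (MeasurableSet.iInter fun j => MeasurableSet.iInter fun _ =>
        measurableSet_lt (hSmeas x k) (hSmeas x j)).inter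
      (measurableSet_le measurable_const (hSmeas x k))
  have hCmeas : ∀ k, MeasurableSet (C k) := by
    intro k
    have : C k = ⋂ j, ⋂ _ : k ≤ j, ⋂ _ : j ≤ n, {ω | S x k ω ≤ S x j ω} := by
      ext ω; simp [hC]
    rw [this]
    exact MeasurableSet.iInter fun j => MeasurableSet.iInter fun _ =>
      MeasurableSet.iInter fun _ => measurableSet_le (hSmeas x k) (hSmeas x j)
  have hDmeas : ∀ k, MeasurableSet (D k) := fun k => (hBmeas k).inter (hCmeas k)
  -- covering
  have hcover : {ω | ∀ i ≤ n, 0 ≤ S x i ω} = ⋃ k ∈ Finset.range (n + 1), D k := by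
    ext ω
    simp only [Set.mem_setOf_eq, Set.mem_iUnion, Finset.mem_range, Nat.lt_succ_iff, exists_prop]
    constructor
    · intro h
      have hex : ∃ k, k ≤ n ∧ ∀ j ≤ n, S x k ω ≤ S x j ω := by
        obtain ⟨k, hk, hk2⟩ := Finset.exists_min_image (Finset.range (n + 1))
          (fun j => S x j ω) ⟨0, by simp⟩
        exact ⟨k, by simpa [Nat.lt_succ_iff] using hk,
          fun j hj => hk2 j (by simp [Nat.lt_succ_iff, hj])⟩
      obtain ⟨hkn, hkmin⟩ := Nat.find_spec hex
      refine ⟨Nat.find hex, hkn, (hmemD _ ω).2 ⟨?_, h _ hkn, fun j _ hjn => hkmin j hjn⟩⟩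
      intro j hjk
      rcases lt_or_ge (S x (Nat.find hex) ω) (S x j ω) with h' | h'
      · exact h'
      · exact absurd ⟨by omega, fun j' hj' => le_trans h' (hkmin j' hj')⟩
          (Nat.find_min hex hjk)
    · rintro ⟨k, hkn, hk⟩ i hin
      obtain ⟨h1, h2, h3⟩ := (hmemD k ω).1 hk
      rcases lt_or_ge i k with h | h
      · exact le_of_lt (lt_of_le_of_lt h2 (h1 i h))
      · exact le_trans h2 (h3 i h hin)
  -- disjointness
  have hdisj : (↑(Finset.range (n + 1)) : Set ℕ).PairwiseDisjoint D := by
    have key : ∀ a b, a < b → b ≤ n → Disjoint (D a) (D b) := by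
      intro a b hab hbn
      rw [Set.disjoint_left]
      intro ω hωa hωb
      obtain ⟨_, _, ha3⟩ := (hmemD a ω).1 hωa
      obtain ⟨hb1, _, _⟩ := (hmemD b ω).1 hωb
      exact absurd (ha3 b hab.le hbn) (not_le.mpr (hb1 a hab))
    intro a ha b hb hab
    simp only [Finset.coe_range, Set.mem_Iio, Nat.lt_succ_iff] at ha hb
    rcases lt_or_gt_of_ne hab with h | h
    · exact key a b h hb
    · exact (key b a h ha).symm
  have hsplit : μ {ω | ∀ i ≤ n, 0 ≤ S x i ω} = ∑ k ∈ Finset.range (n + 1), μ (D k) := by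
    rw [hcover, measure_biUnion_finset hdisj fun k _ => hDmeas k]
  -- D 0 has measure ρ n
  have hD0 : μ (D 0) = ρ n := by
    have : D 0 = {ω | ∀ i ≤ n, 0 ≤ S 0 i ω} := by
      ext ω
      rw [hmemD]
      simp only [Set.mem_setOf_eq, Nat.not_lt_zero, IsEmpty.forall_iff, forall_const,
        Nat.zero_le, true_and, hS0, true_implies]
      have hSxy : ∀ i, S x i ω = x + S 0 i ω := by
        intro i; rw [hS, hS]; ring
      constructor
      · rintro ⟨-, h⟩ i hin
        have := h i hin
        rw [hSxy i] at this
        linarith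
      · intro h
        exact ⟨hx, fun j hjn => by rw [hSxy j]; linarith [h j hjn]⟩
    rw [this, hρ]
  -- the main per-k computation
  have hkey : ∀ k ∈ Finset.Icc 1 n, μ (D k) = μ (B k) * ρ (n - k) := by
    intro k hk
    simp only [Finset.mem_Icc] at hk
    obtain ⟨hk1, hkn⟩ := hk
    set m := n - k with hm
    -- the tuple maps
    set F : Ω → (Fin k → ℝ) := fun ω i => X i ω with hF
    set G : Ω → (Fin m → ℝ) := fun ω i => X (k + i) ω with hG
    have hFmeas : Measurable F := measurable_pi_lambda _ fun i => hmeas _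
    have hGmeas : Measurable G := measurable_pi_lambda _ fun i => hmeas _
    -- the target sets
    set ev : ∀ l : ℕ, (Fin l → ℝ) → ℕ → ℝ :=
      fun l v i => if h : i < l then v ⟨i, h⟩ else 0 with hev
    have hev_meas : ∀ (l i : ℕ), Measurable fun v : Fin l → ℝ => ev l v i := by
      intro l i
      simp only [hev]
      split
      · exact measurable_pi_apply _
      · exact measurable_const
    have hsum_meas : ∀ (l j : ℕ), Measurable fun v : Fin l → ℝ => ∑ i ∈ Finset.range j, ev l v i :=
      fun l j => Finset.measurable_sum _ fun i _ => hev_meas l i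
    set E : Set (Fin k → ℝ) := {v | (∀ j < k, x + ∑ i ∈ Finset.range k, ev k v i <
        x + ∑ i ∈ Finset.range j, ev k v i) ∧ 0 ≤ x + ∑ i ∈ Finset.range k, ev k v i} with hE
    set E' : Set (Fin m → ℝ) := {v | ∀ j ≤ m, 0 ≤ ∑ i ∈ Finset.range j, ev m v i} with hE'
    have hEmeas : MeasurableSet E := by
      have : E = (⋂ j, ⋂ _ : j < k, {v : Fin k → ℝ | x + ∑ i ∈ Finset.range k, ev k v i <
          x + ∑ i ∈ Finset.range j, ev k v i}) ∩
          {v | 0 ≤ x + ∑ i ∈ Finset.range k, ev k v i} := by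
        ext v; simp [hE]
      rw [this]
      exact (MeasurableSet.iInter fun j => MeasurableSet.iInter fun _ =>
          measurableSet_lt (measurable_const.add (hsum_meas k k))
            (measurable_const.add (hsum_meas k j))).inter
        (measurableSet_le measurable_const (measurable_const.add (hsum_meas k k)))
    have hE'meas : MeasurableSet E' := by
      have : E' = ⋂ j, ⋂ _ : j ≤ m, {v : Fin m → ℝ | 0 ≤ ∑ i ∈ Finset.range j, ev m v i} := by
        ext v; simp [hE']
      rw [this]
      exact MeasurableSet.iInter fun j => MeasurableSet.iInter fun _ =>
        measurableSet_le measurable_const (hsum_meas m j)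
    -- sums of ev of tuples
    have hsumF : ∀ (ω : Ω) (j : ℕ), j ≤ k →
        ∑ i ∈ Finset.range j, ev k (F ω) i = ∑ i ∈ Finset.range j, X i ω := by
      intro ω j hj
      refine Finset.sum_congr rfl fun i hi => ?_
      rw [Finset.mem_range] at hi
      simp only [hev, hF, dif_pos (by omega : i < k)]
    have hsumG : ∀ (ω : Ω) (j : ℕ), j ≤ m →
        ∑ i ∈ Finset.range j, ev m (G ω) i = ∑ i ∈ Finset.range j, X (k + i) ω := by
      intro ω j hj
      refine Finset.sum_congr rfl fun i hi => ?_
      rw [Finset.mem_range] at hi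
      simp only [hev, hG, dif_pos (by omega : i < m)]
    -- identify preimages
    have hFE : F ⁻¹' E = B k := by
      ext ω
      simp only [Set.mem_preimage, hE, Set.mem_setOf_eq, hB]
      rw [hsumF ω k le_rfl]
      constructor
      · rintro ⟨h1, h2⟩
        refine ⟨fun j hj => ?_, by rw [hS]; exact h2⟩
        have := h1 j hj
        rw [hsumF ω j hj.le] at this
        rw [hS, hS]; exact this
      · rintro ⟨h1, h2⟩
        refine ⟨fun j hj => ?_, by rw [hS] at h2; exact h2⟩
        rw [hsumF ω j hj.le]
        have := h1 j hj
        rw [hS, hS] at this; exact this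
    -- S x (k+j) - S x k as shifted sum
    have hshift : ∀ (ω : Ω) (j : ℕ), S x (k + j) ω = S x k ω + ∑ i ∈ Finset.range j, X (k + i) ω := by
      intro ω j
      rw [hS, hS]
      have : ∑ i ∈ Finset.range (k + j), X i ω
          = ∑ i ∈ Finset.range k, X i ω + ∑ i ∈ Finset.range j, X (k + i) ω := by
        rw [Finset.sum_range_add]
      rw [this]; ring
    have hGE' : G ⁻¹' E' = C k := by
      ext ω
      simp only [Set.mem_preimage, hE', Set.mem_setOf_eq, hC]
      constructor
      · intro h j hkj hjn
        have hjk : j - k ≤ m := by omega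
        have := h (j - k) hjk
        rw [hsumG ω _ hjk] at this
        have e := hshift ω (j - k)
        rw [(by omega : k + (j - k) = j)] at e
        linarith
      · intro h j hj
        rw [hsumG ω j hj]
        have := h (k + j) (by omega) (by omega)
        have e := hshift ω j
        linarith
    -- independence
    have hIndep : ProbabilityTheory.IndepFun F G μ := by
      have hdisjST : Disjoint (Finset.range k) (Finset.Ico k n) := by
        rw [Finset.disjoint_left]
        intro a ha hb
        rw [Finset.mem_range] at ha
        rw [Finset.mem_Ico] at hb
        omega
      have h := hindep.indepFun_finset (Finset.range k) (Finset.Ico k n) hdisjST hmeas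
      have hφ : Measurable fun (u : ↥(Finset.range k) → ℝ) (i : Fin k) =>
          u ⟨(i : ℕ), Finset.mem_range.mpr i.isLt⟩ :=
        measurable_pi_lambda _ fun i => measurable_pi_apply _
      have hψ : Measurable fun (u : ↥(Finset.Ico k n) → ℝ) (i : Fin m) =>
          u ⟨k + (i : ℕ), Finset.mem_Ico.mpr ⟨by omega, by omega⟩⟩ :=
        measurable_pi_lambda _ fun i => measurable_pi_apply _
      exact h.comp hφ hψ
    -- putting it together
    have hmeasD : μ (D k) = μ (B k) * μ (C k) := by
      have hDk : D k = F ⁻¹' E ∩ G ⁻¹' E' := by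
        rw [hFE, hGE']
      rw [hDk, hIndep.measure_inter_preimage_eq_mul E E' hEmeas hE'meas, hFE, hGE']
    -- μ (C k) = ρ (n - k)
    have hCρ : μ (C k) = ρ (n - k) := by
      have hmap := (aux_map_pi μ X hmeas hindep hident m k).trans
        (aux_map_pi μ X hmeas hindep hident m 0).symm
      have hG0meas : Measurable (fun ω (i : Fin m) => X (0 + i) ω) :=
        measurable_pi_lambda _ fun i => hmeas _
      have : μ (G ⁻¹' E') = μ ((fun ω (i : Fin m) => X (0 + i) ω) ⁻¹' E') := by
        rw [← Measure.map_apply hGmeas hE'meas, ← Measure.map_apply hG0meas hE'meas, hmap]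
      rw [← hGE', this, hρ, ← hm]
      congr 1
      ext ω
      simp only [Set.mem_preimage, hE', Set.mem_setOf_eq, zero_add]
      constructor
      · intro h i him
        have := h i him
        have e : ∑ j ∈ Finset.range i, ev m (fun (i : Fin m) => X (i : ℕ) ω) j
            = ∑ j ∈ Finset.range i, X j ω := by
          refine Finset.sum_congr rfl fun j hj => ?_
          rw [Finset.mem_range] at hj
          simp only [hev, dif_pos (by omega : j < m)]
        rw [e] at this
        rw [hS]
        simpa using this
      · intro h j hjm
        have := h j hjm
        rw [hS] at this
        have e : ∑ i ∈ Finset.range j, ev m (fun (i : Fin m) => X (i : ℕ) ω) i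
            = ∑ i ∈ Finset.range j, X i ω := by
          refine Finset.sum_congr rfl fun i hi => ?_
          rw [Finset.mem_range] at hi
          simp only [hev, dif_pos (by omega : i < m)]
        rw [e]
        simpa using this
    rw [hmeasD, hCρ]
  -- assemble
  have hrange : Finset.range (n + 1) = insert 0 (Finset.Icc 1 n) := by
    ext j
    simp only [Finset.mem_range, Finset.mem_insert, Finset.mem_Icc]
    omega
  rw [hsplit, hrange, Finset.sum_insert (by simp), hD0, Finset.sum_congr rfl hkey]
end

section
/- Let (S_n) be a random walk started at x ≥ 0 with renewal function R(x) := ∑_{k=0}^∞ P(S_k ≥ −x, S_k < min_{0≤j≤k−1} S_j) (walk started at 0). Then P_x(min_{0≤i≤n} S_i ≥ 0) ≤ R(x)·ρ(n) + ∑_{k=1}^n P_x(min_{0≤j≤k−1} S_j > S_k ≥ 0)·(ρ(n−k) − ρ(n)), where ρ(n) = P_0(min_{0≤i≤n} S_i ≥ 0). -/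
open MeasureTheory Finset
open scoped ENNReal

namespace Stmt7Aux

variable {Ω : Type*} [MeasurableSpace Ω] {μ : Measure Ω} [IsProbabilityMeasure μ]
  {X : ℕ → Ω → ℝ}

/-! ### Blocks of variables and partial sums of coordinates -/

def blk (X : ℕ → Ω → ℝ) (a m : ℕ) : Ω → (Fin m → ℝ) := fun ω i => X (a + (i : ℕ)) ω

lemma measurable_blk (hmeas : ∀ i, Measurable (X i)) (a m : ℕ) :
    Measurable (blk X a m) := measurable_pi_lambda _ fun _ => hmeas _

noncomputable def psum {m : ℕ} (v : Fin m → ℝ) (d : ℕ) : ℝ :=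
  ∑ i ∈ Finset.univ.filter (fun i : Fin m => (i : ℕ) < d), v i

lemma measurable_psum (m d : ℕ) : Measurable (fun v : Fin m → ℝ => psum v d) :=
  Finset.measurable_sum _ fun i _ => measurable_pi_apply i

lemma psum_zero {m : ℕ} (v : Fin m → ℝ) : psum v 0 = 0 := by
  simp [psum]

lemma psum_blk (a m d : ℕ) (hd : d ≤ m) (ω : Ω) :
    psum (blk X a m ω) d = ∑ i ∈ Finset.range d, X (a + i) ω := by
  unfold psum blk
  refine Finset.sum_bij' (fun (i : Fin m) _ => (i : ℕ))
    (fun i hi => (⟨i, lt_of_lt_of_le (Finset.mem_range.mp hi) hd⟩ : Fin m))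
    ?_ ?_ ?_ ?_ ?_ <;> simp

lemma psum_blk0 (m d : ℕ) (hd : d ≤ m) (ω : Ω) :
    psum (blk X 0 m ω) d = ∑ i ∈ Finset.range d, X i ω := by
  rw [psum_blk 0 m d hd ω]; simp

/-! ### Laws of blocks -/

lemma blk_box (hmeas : ∀ i, Measurable (X i))
    (hindep : ProbabilityTheory.iIndepFun (m := fun _ => Real.measurableSpace) X μ)
    (hident : ∀ i, ProbabilityTheory.IdentDistrib (X i) (X 0) μ μ)
    (a m : ℕ) (B : Fin m → Set ℝ) (hB : ∀ i, MeasurableSet (B i)) :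
    μ (blk X a m ⁻¹' Set.pi Set.univ B) = ∏ i : Fin m, μ (X 0 ⁻¹' B i) := by
  classical
  set sets : ℕ → Set ℝ := fun j => if h : j - a < m then B ⟨j - a, h⟩ else Set.univ with hsets
  have hpre : blk X a m ⁻¹' Set.pi Set.univ B = ⋂ j ∈ Finset.Ico a (a + m), X j ⁻¹' sets j := by
    ext ω
    simp only [Set.mem_preimage, Set.mem_pi, Set.mem_univ, forall_true_left, Set.mem_iInter,
      Finset.mem_Ico, blk, hsets]
    constructor
    · rintro h j ⟨hj1, hj2⟩
      have hlt : j - a < m := by omega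
      rw [dif_pos hlt]
      have : a + ((⟨j - a, hlt⟩ : Fin m) : ℕ) = j := by simp; omega
      have h2 := h ⟨j - a, hlt⟩
      rwa [this] at h2
    · intro h i
      have h2 := h (a + i) ⟨by omega, by have := i.isLt; omega⟩
      have hlt : a + (i : ℕ) - a < m := by have := i.isLt; omega
      rw [dif_pos hlt] at h2
      have : (⟨a + (i : ℕ) - a, hlt⟩ : Fin m) = i := by
        ext; simp
      rwa [this] at h2
  have hmeassets : ∀ j, MeasurableSet (sets j) := by
    intro j; rw [hsets]; dsimp only
    split
    · exact hB _
    · exact MeasurableSet.univ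
  rw [hpre, hindep.measure_inter_preimage_eq_mul (Finset.Ico a (a + m))
    (fun j _ => hmeassets j)]
  have hident' : ∀ j, μ (X j ⁻¹' sets j) = (μ.map (X 0)) (sets j) := by
    intro j
    rw [(hident j).measure_mem_eq (hmeassets j), Measure.map_apply (hmeas 0) (hmeassets j)]
  calc ∏ j ∈ Finset.Ico a (a + m), μ (X j ⁻¹' sets j)
      = ∏ j ∈ Finset.Ico a (a + m), (μ.map (X 0)) (sets j) := by
        exact Finset.prod_congr rfl fun j _ => hident' j
    _ = ∏ i ∈ Finset.range m, (μ.map (X 0)) (sets (a + i)) := by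
        rw [Finset.prod_Ico_eq_prod_range]; simp
    _ = ∏ i : Fin m, (μ.map (X 0)) (B i) := by
        rw [← Fin.prod_univ_eq_prod_range (fun i => (μ.map (X 0)) (sets (a + i)))]
        refine Finset.prod_congr rfl fun i _ => ?_
        have hlt : a + (i : ℕ) - a < m := by have := i.isLt; omega
        rw [hsets]; dsimp only; rw [dif_pos hlt]
        congr 1
        ext; simp
    _ = ∏ i : Fin m, μ (X 0 ⁻¹' B i) := by
        refine Finset.prod_congr rfl fun i _ => ?_
        rw [Measure.map_apply (hmeas 0) (hB i)]

lemma blk_event (hmeas : ∀ i, Measurable (X i))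
    (hindep : ProbabilityTheory.iIndepFun (m := fun _ => Real.measurableSpace) X μ)
    (hident : ∀ i, ProbabilityTheory.IdentDistrib (X i) (X 0) μ μ)
    (a m : ℕ) {A : Set (Fin m → ℝ)} (hA : MeasurableSet A) :
    μ (blk X a m ⁻¹' A) = μ (blk X 0 m ⁻¹' A) := by
  have hmap : μ.map (blk X a m) = μ.map (blk X 0 m) := by
    haveI h1 : IsProbabilityMeasure (μ.map (blk X a m)) :=
      Measure.isProbabilityMeasure_map (measurable_blk hmeas a m).aemeasurable
    haveI h2 : IsProbabilityMeasure (μ.map (blk X 0 m)) :=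
      Measure.isProbabilityMeasure_map (measurable_blk hmeas 0 m).aemeasurable
    refine ext_of_generate_finite _ generateFrom_pi.symm isPiSystem_pi ?_ ?_
    · rintro s ⟨B, hB, rfl⟩
      simp only [Set.mem_pi, Set.mem_univ, forall_true_left] at hB
      have hB' : ∀ i, MeasurableSet (B i) := fun i => hB i
      rw [Measure.map_apply (measurable_blk hmeas a m) (MeasurableSet.univ_pi hB'),
        Measure.map_apply (measurable_blk hmeas 0 m) (MeasurableSet.univ_pi hB'),
        blk_box hmeas hindep hident a m B hB', blk_box hmeas hindep hident 0 m B hB']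
    · simp
  rw [← Measure.map_apply (measurable_blk hmeas a m) hA, hmap,
    Measure.map_apply (measurable_blk hmeas 0 m) hA]

lemma blk_indepFun (hmeas : ∀ i, Measurable (X i))
    (hindep : ProbabilityTheory.iIndepFun (m := fun _ => Real.measurableSpace) X μ)
    (k m : ℕ) : ProbabilityTheory.IndepFun (blk X 0 k) (blk X k m) μ := by
  have hd : Disjoint (Finset.range k) (Finset.Ico k (k + m)) := by
    simp [Finset.disjoint_left, Finset.mem_range, Finset.mem_Ico]
    omega
  have h := hindep.indepFun_finset (Finset.range k) (Finset.Ico k (k + m)) hd hmeas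
  have h2 := h.comp
    (φ := fun v (i : Fin k) => v (⟨(i : ℕ), Finset.mem_range.mpr i.isLt⟩ : (Finset.range k : Finset ℕ)))
    (ψ := fun v (i : Fin m) => v (⟨k + (i : ℕ), Finset.mem_Ico.mpr ⟨Nat.le_add_right _ _, by have := i.isLt; omega⟩⟩ : (Finset.Ico k (k + m) : Finset ℕ)))
    (measurable_pi_lambda _ fun _ => measurable_pi_apply _)
    (measurable_pi_lambda _ fun _ => measurable_pi_apply _)
  have e1 : (fun v (i : Fin k) => v (⟨(i : ℕ), Finset.mem_range.mpr i.isLt⟩ : (Finset.range k : Finset ℕ)))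
      ∘ (fun a (i : (Finset.range k : Finset ℕ)) => X (i : ℕ) a) = blk X 0 k := by
    funext ω i; simp [blk]
  have e2 : (fun v (i : Fin m) => v (⟨k + (i : ℕ), Finset.mem_Ico.mpr ⟨Nat.le_add_right _ _, by have := i.isLt; omega⟩⟩ : (Finset.Ico k (k + m) : Finset ℕ)))
      ∘ (fun a (i : (Finset.Ico k (k + m) : Finset ℕ)) => X (i : ℕ) a) = blk X k m := by
    funext ω i; simp [blk]
  rw [e1, e2] at h2
  exact h2

lemma blk_inter (hmeas : ∀ i, Measurable (X i))
    (hindep : ProbabilityTheory.iIndepFun (m := fun _ => Real.measurableSpace) X μ)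
    (hident : ∀ i, ProbabilityTheory.IdentDistrib (X i) (X 0) μ μ)
    (k m : ℕ) {A : Set (Fin k → ℝ)} {B : Set (Fin m → ℝ)}
    (hA : MeasurableSet A) (hB : MeasurableSet B) :
    μ (blk X 0 k ⁻¹' A ∩ blk X k m ⁻¹' B)
      = μ (blk X 0 k ⁻¹' A) * μ (blk X 0 m ⁻¹' B) := by
  rw [(blk_indepFun hmeas hindep k m).measure_inter_preimage_eq_mul A B hA hB,
    blk_event hmeas hindep hident k m hB]

/-! ### The relevant events -/

def minSet (k : ℕ) (y : ℝ) : Set (Fin k → ℝ) :=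
  {v | (∀ j < k, psum v k < psum v j) ∧ -y ≤ psum v k}

def staySet (m : ℕ) : Set (Fin m → ℝ) :=
  {v | ∀ d ≤ m, 0 ≤ psum v d}

def fnegSet (j : ℕ) (I : Set ℝ) : Set (Fin j → ℝ) :=
  {v | (∀ l, 1 ≤ l → l < j → 0 ≤ psum v l) ∧ psum v j < 0 ∧ psum v j ∈ I}

lemma measurableSet_minSet (k : ℕ) (y : ℝ) : MeasurableSet (minSet k y) := by
  have : minSet k y = (⋂ j, ⋂ (_ : j < k), {v : Fin k → ℝ | psum v k < psum v j})
      ∩ {v : Fin k → ℝ | -y ≤ psum v k} := by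
    ext v; simp [minSet]
  rw [this]
  exact (MeasurableSet.iInter fun j => MeasurableSet.iInter fun _ =>
    measurableSet_lt (measurable_psum _ _) (measurable_psum _ _)).inter
    (measurableSet_le measurable_const (measurable_psum _ _))

lemma measurableSet_staySet (m : ℕ) : MeasurableSet (staySet m) := by
  have : staySet m = ⋂ d, ⋂ (_ : d ≤ m), {v : Fin m → ℝ | 0 ≤ psum v d} := by
    ext v; simp [staySet]
  rw [this]
  exact MeasurableSet.iInter fun d => MeasurableSet.iInter fun _ =>
    measurableSet_le measurable_const (measurable_psum _ _)

lemma measurableSet_fnegSet (j : ℕ) {I : Set ℝ} (hI : MeasurableSet I) :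
    MeasurableSet (fnegSet j I) := by
  have : fnegSet j I = (⋂ l, ⋂ (_ : 1 ≤ l), ⋂ (_ : l < j), {v : Fin j → ℝ | 0 ≤ psum v l})
      ∩ ({v : Fin j → ℝ | psum v j < 0} ∩ (fun v : Fin j → ℝ => psum v j) ⁻¹' I) := by
    ext v; simp [fnegSet, and_assoc]
  rw [this]
  exact (MeasurableSet.iInter fun l => MeasurableSet.iInter fun _ =>
      MeasurableSet.iInter fun _ =>
      measurableSet_le measurable_const (measurable_psum _ _)).inter
    ((measurableSet_lt (measurable_psum _ _) measurable_const).inter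
      ((measurable_psum _ _) hI))

/-! ### Step inequality for the renewal-type bound -/

noncomputable def EE (μ : Measure Ω) (X : ℕ → Ω → ℝ) (i : ℕ) (z : ℝ) : ℝ≥0∞ :=
  if i = 0 then 1 else μ (blk X 0 i ⁻¹' minSet i z)

lemma EE_le_one {i : ℕ} {z : ℝ} : EE μ X i z ≤ 1 := by
  unfold EE; split
  · exact le_rfl
  · exact prob_le_one

lemma EE_ne_top {i : ℕ} {z : ℝ} : EE μ X i z ≠ ∞ := lt_of_le_of_lt EE_le_one (by norm_num) |>.ne

lemma minSet_empty {k : ℕ} (hk : 1 ≤ k) {y : ℝ} (hy : y ≤ 0) : minSet k y = ∅ := by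
  ext v
  simp only [minSet, Set.mem_setOf_eq, Set.mem_empty_iff_false, iff_false, not_and]
  intro h
  have h0 := h 0 (by omega)
  rw [psum_zero] at h0
  nlinarith [h0]

lemma step_ineq (hmeas : ∀ i, Measurable (X i))
    (hindep : ProbabilityTheory.iIndepFun (m := fun _ => Real.measurableSpace) X μ)
    (hident : ∀ i, ProbabilityTheory.IdentDistrib (X i) (X 0) μ μ)
    {δ : ℝ} (hδ : 0 < δ) {k : ℕ} (hk : 1 ≤ k) (y : ℝ) :
    μ (blk X 0 k ⁻¹' minSet k y) ≤
      ∑ j ∈ Finset.Icc 1 k,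
        (μ (blk X 0 j ⁻¹' fnegSet j (Set.Ioi (-δ))) * EE μ X (k-j) y
          + μ (blk X 0 j ⁻¹' fnegSet j (Set.Iic (-δ))) * EE μ X (k-j) (y-δ)) := by
  classical
  set tail : ℕ → ℝ → Set Ω := fun j z =>
    if j < k then blk X j (k-j) ⁻¹' minSet (k-j) z else Set.univ with htail
  have hsub : blk X 0 k ⁻¹' minSet k y ⊆
      ⋃ j ∈ Finset.Icc 1 k,
        ((blk X 0 j ⁻¹' fnegSet j (Set.Ioi (-δ))) ∩ tail j y
          ∪ (blk X 0 j ⁻¹' fnegSet j (Set.Iic (-δ))) ∩ tail j (y-δ)) := by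
    intro ω hω
    set T : ℕ → ℝ := fun i => ∑ l ∈ Finset.range i, X l ω with hT
    have hvT : ∀ d ≤ k, psum (blk X 0 k ω) d = T d := fun d hd => psum_blk0 k d hd ω
    obtain ⟨hmin, hy⟩ := hω
    rw [hvT k le_rfl] at hy
    have hminT : ∀ j < k, T k < T j := by
      intro j hj
      have := hmin j hj
      rwa [hvT k le_rfl, hvT j hj.le] at this
    have hT0 : T 0 = 0 := by simp [hT]
    have hQk : 1 ≤ k ∧ T k < 0 := ⟨hk, by rw [← hT0]; exact hminT 0 hk⟩
    have hex : ∃ j, 1 ≤ j ∧ T j < 0 := ⟨k, hQk⟩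
    set j0 := Nat.find hex with hj0def
    obtain ⟨hj01, hj0neg⟩ := Nat.find_spec hex
    have hj0le : j0 ≤ k := Nat.find_min' hex hQk
    have hnonneg : ∀ l, 1 ≤ l → l < j0 → 0 ≤ T l := by
      intro l h1 h2
      by_contra hc
      exact Nat.find_min hex h2 ⟨h1, by linarith⟩
    have hfneg : ∀ I : Set ℝ, T j0 ∈ I → blk X 0 j0 ω ∈ fnegSet j0 I := by
      intro I hI
      refine ⟨fun l h1 h2 => ?_, ?_, ?_⟩
      · rw [psum_blk0 j0 l (by omega) ω]; exact hnonneg l h1 h2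
      · rw [psum_blk0 j0 j0 le_rfl ω]; exact hj0neg
      · rw [psum_blk0 j0 j0 le_rfl ω]; exact hI
    have htailmem : ∀ z : ℝ, -z ≤ T k - T j0 → ω ∈ tail j0 z := by
      intro z hz
      rw [htail]
      dsimp only
      split
      · rename_i hlt
        have hsum : ∀ d : ℕ, (∑ i ∈ Finset.range d, X (j0 + i) ω) = T (j0 + d) - T j0 := by
          intro d
          rw [hT]; dsimp only
          rw [Finset.sum_range_add]
          ring
        have hps : ∀ d ≤ k - j0, psum (blk X j0 (k - j0) ω) d = T (j0 + d) - T j0 := by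
          intro d hd
          rw [psum_blk j0 (k - j0) d hd ω, hsum d]
        have hpsk : psum (blk X j0 (k - j0) ω) (k - j0) = T k - T j0 := by
          rw [hps (k - j0) le_rfl]
          congr 2
          omega
        refine ⟨fun d hd => ?_, ?_⟩
        · rw [hpsk, hps d hd.le]
          have := hminT (j0 + d) (by omega)
          linarith
        · rw [hpsk]; exact hz
      · exact Set.mem_univ ω
    refine Set.mem_biUnion (Finset.mem_Icc.mpr ⟨hj01, hj0le⟩) ?_
    by_cases hclass : -δ < T j0
    · left
      exact ⟨hfneg _ hclass, htailmem y (by linarith)⟩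
    · right
      push_neg at hclass
      exact ⟨hfneg _ hclass, htailmem (y - δ) (by linarith)⟩
  calc μ (blk X 0 k ⁻¹' minSet k y)
      ≤ ∑ j ∈ Finset.Icc 1 k,
          μ ((blk X 0 j ⁻¹' fnegSet j (Set.Ioi (-δ))) ∩ tail j y
            ∪ (blk X 0 j ⁻¹' fnegSet j (Set.Iic (-δ))) ∩ tail j (y-δ)) :=
        (measure_mono hsub).trans (measure_biUnion_finset_le _ _)
    _ ≤ ∑ j ∈ Finset.Icc 1 k,
          (μ (blk X 0 j ⁻¹' fnegSet j (Set.Ioi (-δ))) * EE μ X (k-j) y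
            + μ (blk X 0 j ⁻¹' fnegSet j (Set.Iic (-δ))) * EE μ X (k-j) (y-δ)) := by
        refine Finset.sum_le_sum fun j hj => ?_
        rw [Finset.mem_Icc] at hj
        have hgen : ∀ (I : Set ℝ) (hI : MeasurableSet I) (z : ℝ),
            μ ((blk X 0 j ⁻¹' fnegSet j I) ∩ tail j z)
              = μ (blk X 0 j ⁻¹' fnegSet j I) * EE μ X (k-j) z := by
          intro I hI z
          by_cases hlt : j < k
          · rw [htail]
            simp only [hlt, if_true]
            rw [blk_inter hmeas hindep hident j (k - j)
              (measurableSet_fnegSet j hI) (measurableSet_minSet _ _)]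
            have : EE μ X (k - j) z = μ (blk X 0 (k-j) ⁻¹' minSet (k-j) z) := by
              unfold EE
              rw [if_neg (by omega)]
            rw [this]
          · rw [htail]
            simp only [hlt, if_false, Set.inter_univ]
            have : EE μ X (k - j) z = 1 := by unfold EE; rw [if_pos (by omega)]
            rw [this, mul_one]
        refine (measure_union_le _ _).trans ?_
        rw [hgen _ measurableSet_Ioi y, hgen _ measurableSet_Iic (y - δ)]


/-! ### Real-valued step inequality -/

lemma EE_toReal_nonneg {i : ℕ} {z : ℝ} : 0 ≤ (EE μ X i z).toReal := ENNReal.toReal_nonneg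

lemma EE_zero_budget {k : ℕ} (hk : 1 ≤ k) {y : ℝ} (hy : y ≤ 0) : (EE μ X k y).toReal = 0 := by
  unfold EE
  rw [if_neg (by omega), minSet_empty hk hy]
  simp

lemma step_ineq_real (hmeas : ∀ i, Measurable (X i))
    (hindep : ProbabilityTheory.iIndepFun (m := fun _ => Real.measurableSpace) X μ)
    (hident : ∀ i, ProbabilityTheory.IdentDistrib (X i) (X 0) μ μ)
    {δ : ℝ} (hδ : 0 < δ) {k : ℕ} (hk : 1 ≤ k) (y : ℝ) :
    (EE μ X k y).toReal ≤
      ∑ j ∈ Finset.Icc 1 k,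
        ((μ (blk X 0 j ⁻¹' fnegSet j (Set.Ioi (-δ)))).toReal * (EE μ X (k-j) y).toReal
          + (μ (blk X 0 j ⁻¹' fnegSet j (Set.Iic (-δ)))).toReal * (EE μ X (k-j) (y-δ)).toReal) := by
  have h := step_ineq hmeas hindep hident hδ hk y
  have hEk : EE μ X k y = μ (blk X 0 k ⁻¹' minSet k y) := by
    unfold EE; rw [if_neg (by omega)]
  rw [← hEk] at h
  have hterm : ∀ j ∈ Finset.Icc 1 k,
      (μ (blk X 0 j ⁻¹' fnegSet j (Set.Ioi (-δ))) * EE μ X (k-j) y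
        + μ (blk X 0 j ⁻¹' fnegSet j (Set.Iic (-δ))) * EE μ X (k-j) (y-δ)) ≠ ∞ := by
    intro j _
    exact (ENNReal.add_ne_top.mpr
      ⟨ENNReal.mul_ne_top (measure_ne_top μ _) EE_ne_top,
       ENNReal.mul_ne_top (measure_ne_top μ _) EE_ne_top⟩)
  have hsum_ne : (∑ j ∈ Finset.Icc 1 k,
      (μ (blk X 0 j ⁻¹' fnegSet j (Set.Ioi (-δ))) * EE μ X (k-j) y
        + μ (blk X 0 j ⁻¹' fnegSet j (Set.Iic (-δ))) * EE μ X (k-j) (y-δ))) ≠ ∞ := by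
    rw [← lt_top_iff_ne_top, ENNReal.sum_lt_top]
    intro j hj
    exact lt_top_iff_ne_top.mpr (hterm j hj)
  have h2 := ENNReal.toReal_mono hsum_ne h
  refine h2.trans (le_of_eq ?_)
  rw [ENNReal.toReal_sum hterm]
  refine Finset.sum_congr rfl fun j _ => ?_
  rw [ENNReal.toReal_add (ENNReal.mul_ne_top (measure_ne_top μ _) EE_ne_top)
    (ENNReal.mul_ne_top (measure_ne_top μ _) EE_ne_top),
    ENNReal.toReal_mul, ENNReal.toReal_mul]

/-! ### Disjointness: the first strictly negative time is unique -/

lemma sum_fneg_le_one (hmeas : ∀ i, Measurable (X i)) (s : Finset ℕ) {I : Set ℝ} (hI : MeasurableSet I) :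
    ∑ j ∈ s, (μ (blk X 0 j ⁻¹' fnegSet j I)).toReal ≤ 1 := by
  have hdisj : (s : Set ℕ).PairwiseDisjoint (fun j => blk X 0 j ⁻¹' fnegSet j I) := by
    intro j hj j' hj' hne
    wlog hlt : j < j' generalizing j j'
    · exact (this hj' hj hne.symm (by omega)).symm
    refine Set.disjoint_left.mpr fun ω hj hj' => ?_
    obtain ⟨hnn', hneg', -⟩ := hj'
    obtain ⟨-, hneg, -⟩ := hj
    rw [psum_blk0 j j le_rfl ω] at hneg
    rcases Nat.eq_zero_or_pos j with h0 | h1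
    · subst h0; simp at hneg
    · have := hnn' j h1 hlt
      rw [psum_blk0 j' j hlt.le ω] at this
      linarith
  have hmeassets : ∀ j ∈ s, MeasurableSet (blk X 0 j ⁻¹' fnegSet j I) :=
    fun j _ => measurable_blk hmeas 0 j (measurableSet_fnegSet j hI)
  have hsum : ∑ j ∈ s, μ (blk X 0 j ⁻¹' fnegSet j I)
      = μ (⋃ j ∈ s, blk X 0 j ⁻¹' fnegSet j I) :=
    (measure_biUnion_finset hdisj hmeassets).symm
  have h1 : μ (⋃ j ∈ s, blk X 0 j ⁻¹' fnegSet j I) ≤ 1 := prob_le_one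
  calc ∑ j ∈ s, (μ (blk X 0 j ⁻¹' fnegSet j I)).toReal
      = (∑ j ∈ s, μ (blk X 0 j ⁻¹' fnegSet j I)).toReal :=
        (ENNReal.toReal_sum fun j _ => measure_ne_top μ _).symm
    _ ≤ (1 : ℝ≥0∞).toReal := by
        refine ENNReal.toReal_mono (by norm_num) ?_
        rw [hsum]; exact h1
    _ = 1 := by simp

/-! ### Choice of δ -/

lemma exists_delta (hmeas : ∀ i, Measurable (X i)) :
    ∃ δ : ℝ, 0 < δ ∧ ∀ K : ℕ,
      ∑ j ∈ Finset.Icc 1 K, (μ (blk X 0 j ⁻¹' fnegSet j (Set.Ioi (-δ)))).toReal ≤ 1/2 := by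
  classical
  set cc : ℕ → ℝ := fun j => (μ (blk X 0 j ⁻¹' fnegSet j Set.univ)).toReal with hcc
  have hccnn : ∀ j, 0 ≤ cc j := fun j => ENNReal.toReal_nonneg
  have hccle : ∀ K : ℕ, ∑ j ∈ Finset.range K, cc j ≤ 1 :=
    fun K => sum_fneg_le_one hmeas (Finset.range K) MeasurableSet.univ
  have hsumcc : Summable cc := summable_of_sum_range_le hccnn hccle
  -- choose J with small tail
  have htendsto := hsumcc.hasSum.tendsto_sum_nat
  rw [Metric.tendsto_atTop] at htendsto
  obtain ⟨J, hJ⟩ := htendsto (1/4) (by norm_num)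
  have htail : ∀ s : Finset ℕ, (∀ j ∈ s, J ≤ j) → ∑ j ∈ s, cc j ≤ 1/4 := by
    intro s hs
    have hdisj : Disjoint (Finset.range J) s := by
      rw [Finset.disjoint_left]
      intro a ha has
      exact absurd (hs a has) (by simp at ha; omega)
    have h1 : ∑ j ∈ Finset.range J ∪ s, cc j ≤ ∑' j, cc j :=
      Summable.sum_le_tsum _ (fun j _ => hccnn j) hsumcc
    rw [Finset.sum_union hdisj] at h1
    have h2 := hJ J le_rfl
    rw [Real.dist_eq, abs_lt] at h2
    linarith
  -- each of the finitely many leading terms tends to 0 as δ → 0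
  have hlead : Filter.Tendsto
      (fun r : ℕ => ∑ j ∈ Finset.range J,
        (μ (blk X 0 j ⁻¹' fnegSet j (Set.Ioi (-(1/(r+1 : ℝ)))))).toReal)
      Filter.atTop (nhds 0) := by
    have : ∀ j ∈ Finset.range J, Filter.Tendsto
        (fun r : ℕ => (μ (blk X 0 j ⁻¹' fnegSet j (Set.Ioi (-(1/(r+1 : ℝ)))))).toReal)
        Filter.atTop (nhds 0) := by
      intro j _
      set sdl : ℕ → Set Ω := fun r => blk X 0 j ⁻¹' fnegSet j (Set.Ioi (-(1/(r+1 : ℝ))))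
        with hsdl
      have hanti : Antitone sdl := by
        intro r r' hrr'
        refine Set.preimage_mono fun v hv => ?_
        obtain ⟨h1, h2, h3⟩ := hv
        refine ⟨h1, h2, ?_⟩
        simp only [Set.mem_Ioi] at h3 ⊢
        have hcast : (r : ℝ) ≤ (r' : ℝ) := Nat.cast_le.mpr hrr'
        have hle : (1 : ℝ)/(r'+1) ≤ 1/(r+1) := by
          apply one_div_le_one_div_of_le
          · positivity
          · linarith
        linarith
      have hinter : (⋂ r, sdl r) = ∅ := by
        ext ω
        simp only [Set.mem_iInter, Set.mem_empty_iff_false, iff_false]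
        intro hall
        obtain ⟨-, hneg, -⟩ := hall 0
        obtain ⟨r, hr⟩ := exists_nat_one_div_lt (show (0:ℝ) < -(psum (blk X 0 j ω) j) by linarith)
        obtain ⟨-, -, h3⟩ := hall r
        simp only [Set.mem_Ioi] at h3
        linarith
      have hmeassdl : ∀ r, NullMeasurableSet (sdl r) μ :=
        fun r => (measurable_blk hmeas 0 j (measurableSet_fnegSet j measurableSet_Ioi)).nullMeasurableSet
      have htend := tendsto_measure_iInter_atTop hmeassdl hanti ⟨0, measure_ne_top μ _⟩
      rw [hinter, measure_empty] at htend
      have hcomp := (ENNReal.tendsto_toReal (show (0:ℝ≥0∞) ≠ ⊤ by simp)).comp htend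
      exact hcomp
    simpa using tendsto_finset_sum (Finset.range J) this
  have hev : ∀ᶠ r : ℕ in Filter.atTop,
      (∑ j ∈ Finset.range J,
        (μ (blk X 0 j ⁻¹' fnegSet j (Set.Ioi (-(1/(r+1 : ℝ)))))).toReal) < 1/4 := by
    exact hlead.eventually_lt_const (by norm_num)
  obtain ⟨r, hr⟩ := hev.exists
  refine ⟨1/(r+1 : ℝ), by positivity, fun K => ?_⟩
  have hsplit := Finset.sum_filter_add_sum_filter_not (Finset.Icc 1 K)
    (fun j => j < J)
    (fun j => (μ (blk X 0 j ⁻¹' fnegSet j (Set.Ioi (-(1/(r+1 : ℝ)))))).toReal)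
  rw [← hsplit]
  have hA : ∑ j ∈ (Finset.Icc 1 K).filter (fun j => j < J),
      (μ (blk X 0 j ⁻¹' fnegSet j (Set.Ioi (-(1/(r+1 : ℝ)))))).toReal < 1/4 := by
    refine lt_of_le_of_lt ?_ hr
    refine Finset.sum_le_sum_of_subset_of_nonneg ?_ (fun j _ _ => ENNReal.toReal_nonneg)
    intro j hj
    simp only [Finset.mem_filter, Finset.mem_range] at hj ⊢
    exact hj.2
  have hB : ∑ j ∈ (Finset.Icc 1 K).filter (fun j => ¬ j < J),
      (μ (blk X 0 j ⁻¹' fnegSet j (Set.Ioi (-(1/(r+1 : ℝ)))))).toReal ≤ 1/4 := by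
    refine le_trans ?_ (htail ((Finset.Icc 1 K).filter (fun j => ¬ j < J)) ?_)
    · refine Finset.sum_le_sum fun j _ => ?_
      rw [hcc]
      refine ENNReal.toReal_mono (measure_ne_top μ _) ?_
      refine measure_mono (Set.preimage_mono fun v hv => ?_)
      exact ⟨hv.1, hv.2.1, trivial⟩
    · intro j hj
      simp only [Finset.mem_filter] at hj
      omega
  linarith

/-! ### Geometric bound on partial sums by induction on the budget -/

lemma g_bound (hmeas : ∀ i, Measurable (X i))
    (hindep : ProbabilityTheory.iIndepFun (m := fun _ => Real.measurableSpace) X μ)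
    (hident : ∀ i, ProbabilityTheory.IdentDistrib (X i) (X 0) μ μ)
    {δ : ℝ} (hδ : 0 < δ)
    (hsmall : ∀ K : ℕ,
      ∑ j ∈ Finset.Icc 1 K, (μ (blk X 0 j ⁻¹' fnegSet j (Set.Ioi (-δ)))).toReal ≤ 1/2) :
    ∀ (L : ℕ) (y : ℝ), y ≤ L * δ → ∀ K : ℕ,
      ∑ k ∈ Finset.Icc 1 K, (EE μ X k y).toReal ≤ 4^(L+1) := by
  intro L
  induction L with
  | zero =>
    intro y hy K
    have : ∀ k ∈ Finset.Icc 1 K, (EE μ X k y).toReal = 0 := by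
      intro k hk
      rw [Finset.mem_Icc] at hk
      exact EE_zero_budget hk.1 (by simpa using hy)
    rw [Finset.sum_congr rfl this]
    simp
  | succ L ih =>
    intro y hy K
    set G : ℝ := ∑ k ∈ Finset.Icc 1 K, (EE μ X k y).toReal with hG
    set G' : ℝ := ∑ k ∈ Finset.Icc 1 K, (EE μ X k (y - δ)).toReal with hG'
    have hG'le : G' ≤ 4^(L+1) := ih (y - δ) (by push_cast at hy ⊢; linarith) K
    have hGnn : 0 ≤ G := Finset.sum_nonneg fun k _ => ENNReal.toReal_nonneg
    have hG'nn : 0 ≤ G' := Finset.sum_nonneg fun k _ => ENNReal.toReal_nonneg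
    -- step inequality summed over k
    have hstep : G ≤ ∑ k ∈ Finset.Icc 1 K, ∑ j ∈ Finset.Icc 1 k,
        ((μ (blk X 0 j ⁻¹' fnegSet j (Set.Ioi (-δ)))).toReal * (EE μ X (k-j) y).toReal
          + (μ (blk X 0 j ⁻¹' fnegSet j (Set.Iic (-δ)))).toReal * (EE μ X (k-j) (y-δ)).toReal) := by
      refine Finset.sum_le_sum fun k hk => ?_
      rw [Finset.mem_Icc] at hk
      exact step_ineq_real hmeas hindep hident hδ hk.1 y
    have hswap : ∑ k ∈ Finset.Icc 1 K, ∑ j ∈ Finset.Icc 1 k,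
        ((μ (blk X 0 j ⁻¹' fnegSet j (Set.Ioi (-δ)))).toReal * (EE μ X (k-j) y).toReal
          + (μ (blk X 0 j ⁻¹' fnegSet j (Set.Iic (-δ)))).toReal * (EE μ X (k-j) (y-δ)).toReal)
        = ∑ j ∈ Finset.Icc 1 K, ∑ k ∈ Finset.Icc j K,
        ((μ (blk X 0 j ⁻¹' fnegSet j (Set.Ioi (-δ)))).toReal * (EE μ X (k-j) y).toReal
          + (μ (blk X 0 j ⁻¹' fnegSet j (Set.Iic (-δ)))).toReal * (EE μ X (k-j) (y-δ)).toReal) := by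
      refine Finset.sum_comm' ?_
      intro k j
      simp only [Finset.mem_Icc]
      omega
    -- bound the inner sums
    have hinner : ∀ (z : ℝ) (j : ℕ), j ∈ Finset.Icc 1 K →
        ∑ k ∈ Finset.Icc j K, (EE μ X (k-j) z).toReal
          ≤ 1 + ∑ k ∈ Finset.Icc 1 K, (EE μ X k z).toReal := by
      intro z j hj
      rw [Finset.mem_Icc] at hj
      have h1 : ∑ k ∈ Finset.Icc j K, (EE μ X (k-j) z).toReal
          = ∑ i ∈ Finset.range (K + 1 - j), (EE μ X i z).toReal := by
        rw [← Finset.Ico_add_one_right_eq_Icc, Finset.sum_Ico_eq_sum_range]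
        refine Finset.sum_congr rfl fun i _ => ?_
        rw [Nat.add_sub_cancel_left]
      rw [h1]
      have h2 : Finset.range (K + 1 - j) = insert 0 (Finset.Ico 1 (K + 1 - j)) := by
        ext i
        simp only [Finset.mem_range, Finset.mem_insert, Finset.mem_Ico]
        omega
      rw [h2, Finset.sum_insert (by simp)]
      have h3 : (EE μ X 0 z).toReal = 1 := by unfold EE; simp
      rw [h3]
      gcongr 1 + ?_
      refine Finset.sum_le_sum_of_subset_of_nonneg ?_ fun i _ _ => ENNReal.toReal_nonneg
      intro i hi
      simp only [Finset.mem_Ico] at hi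
      simp only [Finset.mem_Icc]
      omega
    have hkey : G ≤ (1/2) * (1 + G) + 1 * (1 + G') := by
      refine hstep.trans ?_
      rw [hswap]
      have hbig := sum_fneg_le_one (μ := μ) hmeas (Finset.Icc 1 K)
        (measurableSet_Iic : MeasurableSet (Set.Iic (-δ)))
      calc ∑ j ∈ Finset.Icc 1 K, ∑ k ∈ Finset.Icc j K,
            ((μ (blk X 0 j ⁻¹' fnegSet j (Set.Ioi (-δ)))).toReal * (EE μ X (k-j) y).toReal
              + (μ (blk X 0 j ⁻¹' fnegSet j (Set.Iic (-δ)))).toReal * (EE μ X (k-j) (y-δ)).toReal)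
          = ∑ j ∈ Finset.Icc 1 K,
            ((μ (blk X 0 j ⁻¹' fnegSet j (Set.Ioi (-δ)))).toReal
                * (∑ k ∈ Finset.Icc j K, (EE μ X (k-j) y).toReal)
              + (μ (blk X 0 j ⁻¹' fnegSet j (Set.Iic (-δ)))).toReal
                * (∑ k ∈ Finset.Icc j K, (EE μ X (k-j) (y-δ)).toReal)) := by
            refine Finset.sum_congr rfl fun j _ => ?_
            rw [Finset.sum_add_distrib, Finset.mul_sum, Finset.mul_sum]
        _ ≤ ∑ j ∈ Finset.Icc 1 K,
            ((μ (blk X 0 j ⁻¹' fnegSet j (Set.Ioi (-δ)))).toReal * (1 + G)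
              + (μ (blk X 0 j ⁻¹' fnegSet j (Set.Iic (-δ)))).toReal * (1 + G')) := by
            refine Finset.sum_le_sum fun j hj => ?_
            exact add_le_add
              (mul_le_mul_of_nonneg_left (hinner y j hj) ENNReal.toReal_nonneg)
              (mul_le_mul_of_nonneg_left (hinner (y - δ) j hj) ENNReal.toReal_nonneg)
        _ = (∑ j ∈ Finset.Icc 1 K, (μ (blk X 0 j ⁻¹' fnegSet j (Set.Ioi (-δ)))).toReal) * (1 + G)
              + (∑ j ∈ Finset.Icc 1 K, (μ (blk X 0 j ⁻¹' fnegSet j (Set.Iic (-δ)))).toReal) * (1 + G') := by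
            rw [Finset.sum_add_distrib, ← Finset.sum_mul, ← Finset.sum_mul]
        _ ≤ (1/2) * (1 + G) + 1 * (1 + G') := by
            refine add_le_add
              (mul_le_mul_of_nonneg_right (hsmall K) (by linarith))
              (mul_le_mul_of_nonneg_right hbig (by linarith))
    -- solve the recursion
    have h4 : G ≤ 3 + 2 * G' := by linarith
    have h5 : (4:ℝ)^(L+1+1) = 4 * 4^(L+1) := by ring
    have h6 : (4:ℝ) ≤ 4^(L+1) := le_self_pow₀ (by norm_num) (by omega)
    linarith

lemma summable_terms (hmeas : ∀ i, Measurable (X i))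
    (hindep : ProbabilityTheory.iIndepFun (m := fun _ => Real.measurableSpace) X μ)
    (hident : ∀ i, ProbabilityTheory.IdentDistrib (X i) (X 0) μ μ) (x : ℝ) :
    Summable (fun k => (μ (blk X 0 k ⁻¹' minSet k x)).toReal) := by
  obtain ⟨δ, hδ, hsmall⟩ := exists_delta (μ := μ) hmeas
  obtain ⟨L, hL⟩ : ∃ L : ℕ, x ≤ L * δ := by
    obtain ⟨L, hL⟩ := exists_nat_ge (x / δ)
    exact ⟨L, by rw [div_le_iff₀ hδ] at hL; linarith⟩
  refine summable_of_sum_range_le (c := 1 + 4^(L+1)) (fun k => ENNReal.toReal_nonneg)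
    (fun K => ?_)
  rcases Nat.eq_zero_or_pos K with h0 | hpos
  · subst h0
    simp only [Finset.range_zero, Finset.sum_empty]
    positivity
  · rw [Finset.range_eq_Ico, Finset.sum_eq_sum_Ico_succ_bot hpos]
    refine add_le_add ?_ ?_
    · calc (μ (blk X 0 0 ⁻¹' minSet 0 x)).toReal
          ≤ (1 : ℝ≥0∞).toReal := ENNReal.toReal_mono (by norm_num) prob_le_one
        _ = 1 := by simp
    · have heq : ∀ k ∈ Finset.Ico 1 K, (μ (blk X 0 k ⁻¹' minSet k x)).toReal
          = (EE μ X k x).toReal := by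
        intro k hk
        rw [Finset.mem_Ico] at hk
        unfold EE
        rw [if_neg (by omega)]
      rw [Finset.sum_congr rfl heq]
      refine le_trans ?_ (g_bound hmeas hindep hident hδ hsmall L x hL K)
      refine Finset.sum_le_sum_of_subset_of_nonneg ?_ fun i _ _ => ENNReal.toReal_nonneg
      intro i hi
      rw [Finset.mem_Ico] at hi
      rw [Finset.mem_Icc]
      omega

/-! ### Decomposition at the first minimum -/

lemma decomp (hmeas : ∀ i, Measurable (X i))
    (hindep : ProbabilityTheory.iIndepFun (m := fun _ => Real.measurableSpace) X μ)
    (hident : ∀ i, ProbabilityTheory.IdentDistrib (X i) (X 0) μ μ)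
    {x : ℝ} (hx : 0 ≤ x) (n : ℕ) :
    (μ {ω | ∀ i ≤ n, 0 ≤ x + ∑ l ∈ Finset.range i, X l ω}).toReal
      ≤ ∑ k ∈ Finset.range (n+1),
          (μ (blk X 0 k ⁻¹' minSet k x)).toReal
            * (μ (blk X 0 (n-k) ⁻¹' staySet (n-k))).toReal := by
  classical
  have hsub : {ω | ∀ i ≤ n, 0 ≤ x + ∑ l ∈ Finset.range i, X l ω} ⊆
      ⋃ k ∈ Finset.range (n+1),
        (blk X 0 k ⁻¹' minSet k x ∩ blk X k (n-k) ⁻¹' staySet (n-k)) := by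
    intro ω hω
    simp only [Set.mem_setOf_eq] at hω
    set W : ℕ → ℝ := fun i => x + ∑ l ∈ Finset.range i, X l ω with hW
    have hex : ∃ k, k ≤ n ∧ ∀ i ≤ n, W k ≤ W i := by
      obtain ⟨k, hk1, hk2⟩ := Finset.exists_min_image (Finset.range (n+1))
        (fun i => W i) ⟨0, by simp⟩
      rw [Finset.mem_range] at hk1
      exact ⟨k, by omega, fun i hi => hk2 i (Finset.mem_range.mpr (by omega))⟩
    set k0 := Nat.find hex with hk0def
    obtain ⟨hk0n, hk0min⟩ := Nat.find_spec hex
    have hk0first : ∀ j < k0, W k0 < W j := by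
      intro j hj
      rcases lt_or_ge (W k0) (W j) with h | h
      · exact h
      · exfalso
        refine Nat.find_min hex hj ⟨by omega, fun i hi => le_trans h (hk0min i hi)⟩
    have hmem : ω ∈ blk X 0 k0 ⁻¹' minSet k0 x ∩ blk X k0 (n-k0) ⁻¹' staySet (n-k0) := by
      refine ⟨?_, ?_⟩
      swap
      · intro d hd
        rw [psum_blk k0 (n - k0) d hd ω]
        have hsum : ∑ i ∈ Finset.range d, X (k0 + i) ω = W (k0 + d) - W k0 := by
          rw [hW]; dsimp only
          rw [Finset.sum_range_add]
          ring
        rw [hsum]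
        have := hk0min (k0 + d) (by omega)
        linarith
      refine ⟨fun j hj => ?_, ?_⟩
      · rw [psum_blk0 k0 k0 le_rfl ω, psum_blk0 k0 j hj.le ω]
        have := hk0first j hj
        rw [hW] at this
        dsimp only at this
        linarith
      · rw [psum_blk0 k0 k0 le_rfl ω]
        have h1 := hω k0 hk0n
        linarith
    exact Set.mem_biUnion (Finset.mem_range.mpr (by omega)) hmem
  have hne : ∀ k ∈ Finset.range (n+1),
      μ (blk X 0 k ⁻¹' minSet k x ∩ blk X k (n-k) ⁻¹' staySet (n-k)) ≠ ∞ :=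
    fun k _ => measure_ne_top μ _
  calc (μ {ω | ∀ i ≤ n, 0 ≤ x + ∑ l ∈ Finset.range i, X l ω}).toReal
      ≤ (∑ k ∈ Finset.range (n+1),
          μ (blk X 0 k ⁻¹' minSet k x ∩ blk X k (n-k) ⁻¹' staySet (n-k))).toReal := by
        refine ENNReal.toReal_mono ?_ ((measure_mono hsub).trans (measure_biUnion_finset_le _ _))
        rw [← lt_top_iff_ne_top, ENNReal.sum_lt_top]
        exact fun k hk => lt_top_iff_ne_top.mpr (hne k hk)
    _ = ∑ k ∈ Finset.range (n+1),
          (μ (blk X 0 k ⁻¹' minSet k x ∩ blk X k (n-k) ⁻¹' staySet (n-k))).toReal :=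
        ENNReal.toReal_sum hne
    _ = ∑ k ∈ Finset.range (n+1),
          (μ (blk X 0 k ⁻¹' minSet k x)).toReal
            * (μ (blk X 0 (n-k) ⁻¹' staySet (n-k))).toReal := by
        refine Finset.sum_congr rfl fun k _ => ?_
        rw [blk_inter hmeas hindep hident k (n-k)
          (measurableSet_minSet _ _) (measurableSet_staySet _), ENNReal.toReal_mul]

end Stmt7Aux

open Stmt7Aux


/-- With `R(x) := ∑_{k≥0} P(S_k ≥ -x, S_k < min_{0≤j≤k-1} S_j)` (walk started at `0`) and
`ρ(n) := P(min_{0≤i≤n} S_i ≥ 0)`, one has for `x ≥ 0`, `n ≥ 1`: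
`P_x(min_{0≤i≤n} S_i ≥ 0) ≤ R(x) ρ(n) + ∑_{k=1}^n P_x(min_{0≤j≤k-1} S_j > S_k ≥ 0)(ρ(n-k) - ρ(n))`. -/
theorem stmt7 {Ω : Type*} [MeasurableSpace Ω] (μ : Measure Ω) [IsProbabilityMeasure μ]
    (X : ℕ → Ω → ℝ) (hmeas : ∀ i, Measurable (X i))
    (hindep : ProbabilityTheory.iIndepFun (m := fun _ => Real.measurableSpace) X μ)
    (hident : ∀ i, ProbabilityTheory.IdentDistrib (X i) (X 0) μ μ)
    (S : ℝ → ℕ → Ω → ℝ) (hS : ∀ x n ω, S x n ω = x + ∑ i ∈ Finset.range n, X i ω)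
    (ρ : ℕ → ℝ) (hρ : ∀ n, ρ n = (μ {ω | ∀ i ≤ n, 0 ≤ S 0 i ω}).toReal)
    (R : ℝ → ℝ)
    (hR : ∀ x, R x =
      ∑' k : ℕ, (μ {ω | -x ≤ S 0 k ω ∧ ∀ j < k, S 0 k ω < S 0 j ω}).toReal)
    (x : ℝ) (hx : 0 ≤ x) (n : ℕ) (hn : 1 ≤ n) :
    (μ {ω | ∀ i ≤ n, 0 ≤ S x i ω}).toReal ≤
      R x * ρ n + ∑ k ∈ Finset.Icc 1 n,
        (μ {ω | (∀ j < k, S x k ω < S x j ω) ∧ 0 ≤ S x k ω}).toReal * (ρ (n - k) - ρ n) := by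

  classical
  set rr : ℕ → ℝ := fun k => (μ (blk X 0 k ⁻¹' minSet k x)).toReal with hrr
  have hrrnn : ∀ k, 0 ≤ rr k := fun k => ENNReal.toReal_nonneg
  -- set identifications
  have hRset : ∀ k : ℕ, {ω | -x ≤ S 0 k ω ∧ ∀ j < k, S 0 k ω < S 0 j ω}
      = blk X 0 k ⁻¹' minSet k x := by
    intro k
    ext ω
    simp only [Set.mem_setOf_eq, Set.mem_preimage, minSet, hS, zero_add]
    constructor
    · rintro ⟨h1, h2⟩
      refine ⟨fun j hj => ?_, ?_⟩
      · rw [psum_blk0 k k le_rfl ω, psum_blk0 k j hj.le ω]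
        exact h2 j hj
      · rw [psum_blk0 k k le_rfl ω]; exact h1
    · rintro ⟨h1, h2⟩
      rw [psum_blk0 k k le_rfl ω] at h2
      refine ⟨h2, fun j hj => ?_⟩
      have := h1 j hj
      rwa [psum_blk0 k k le_rfl ω, psum_blk0 k j hj.le ω] at this
  have hEset : ∀ k : ℕ, {ω | (∀ j < k, S x k ω < S x j ω) ∧ 0 ≤ S x k ω}
      = blk X 0 k ⁻¹' minSet k x := by
    intro k
    ext ω
    simp only [Set.mem_setOf_eq, Set.mem_preimage, minSet, hS]
    constructor
    · rintro ⟨h1, h2⟩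
      refine ⟨fun j hj => ?_, ?_⟩
      · rw [psum_blk0 k k le_rfl ω, psum_blk0 k j hj.le ω]
        have := h1 j hj
        linarith
      · rw [psum_blk0 k k le_rfl ω]; linarith
    · rintro ⟨h1, h2⟩
      rw [psum_blk0 k k le_rfl ω] at h2
      refine ⟨fun j hj => ?_, by linarith⟩
      have := h1 j hj
      rw [psum_blk0 k k le_rfl ω, psum_blk0 k j hj.le ω] at this
      linarith
  have hρset : ∀ m : ℕ, {ω | ∀ i ≤ m, 0 ≤ S 0 i ω} = blk X 0 m ⁻¹' staySet m := by
    intro m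
    ext ω
    simp only [Set.mem_setOf_eq, Set.mem_preimage, staySet, hS, zero_add]
    constructor
    · intro h d hd
      rw [psum_blk0 m d hd ω]
      exact h d hd
    · intro h d hd
      have := h d hd
      rwa [psum_blk0 m d hd ω] at this
  have hρ' : ∀ m : ℕ, ρ m = (μ (blk X 0 m ⁻¹' staySet m)).toReal := by
    intro m; rw [hρ m, hρset m]
  have hρnn : ∀ m : ℕ, 0 ≤ ρ m := fun m => by rw [hρ m]; exact ENNReal.toReal_nonneg
  -- summability and tsum identification
  have hsummable : Summable rr := summable_terms hmeas hindep hident x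
  have hRx : R x = ∑' k, rr k := by
    rw [hR x]
    exact tsum_congr fun k => by rw [hRset k]
  -- main decomposition
  have hLHS : {ω | ∀ i ≤ n, 0 ≤ S x i ω}
      = {ω | ∀ i ≤ n, 0 ≤ x + ∑ l ∈ Finset.range i, X l ω} := by
    ext ω; simp only [Set.mem_setOf_eq, hS]
  have hmain : (μ {ω | ∀ i ≤ n, 0 ≤ S x i ω}).toReal
      ≤ ∑ k ∈ Finset.range (n+1), rr k * ρ (n - k) := by
    rw [hLHS]
    refine (decomp hmeas hindep hident hx n).trans (le_of_eq ?_)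
    exact Finset.sum_congr rfl fun k _ => by rw [hρ' (n - k)]
  -- algebra
  have halg : ∑ k ∈ Finset.range (n+1), rr k * ρ (n - k)
      = (∑ k ∈ Finset.range (n+1), rr k) * ρ n
        + ∑ k ∈ Finset.range (n+1), rr k * (ρ (n - k) - ρ n) := by
    rw [Finset.sum_mul, ← Finset.sum_add_distrib]
    exact Finset.sum_congr rfl fun k _ => by ring
  have hfirst : (∑ k ∈ Finset.range (n+1), rr k) * ρ n ≤ R x * ρ n := by
    refine mul_le_mul_of_nonneg_right ?_ (hρnn n)
    rw [hRx]
    exact Summable.sum_le_tsum _ (fun k _ => hrrnn k) hsummable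
  have hsecond : ∑ k ∈ Finset.range (n+1), rr k * (ρ (n - k) - ρ n)
      = ∑ k ∈ Finset.Icc 1 n, rr k * (ρ (n - k) - ρ n) := by
    rw [Finset.range_eq_Ico, Finset.sum_eq_sum_Ico_succ_bot (by omega)]
    simp only [Nat.sub_zero, sub_self, mul_zero, zero_add]
    rw [Finset.Ico_add_one_right_eq_Icc]
  have hRHS : ∑ k ∈ Finset.Icc 1 n,
      (μ {ω | (∀ j < k, S x k ω < S x j ω) ∧ 0 ≤ S x k ω}).toReal * (ρ (n - k) - ρ n)
      = ∑ k ∈ Finset.Icc 1 n, rr k * (ρ (n - k) - ρ n) :=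
    Finset.sum_congr rfl fun k _ => by rw [hEset k]
  rw [hRHS]
  calc (μ {ω | ∀ i ≤ n, 0 ≤ S x i ω}).toReal
      ≤ ∑ k ∈ Finset.range (n+1), rr k * ρ (n - k) := hmain
    _ = (∑ k ∈ Finset.range (n+1), rr k) * ρ n
        + ∑ k ∈ Finset.range (n+1), rr k * (ρ (n - k) - ρ n) := halg
    _ ≤ R x * ρ n + ∑ k ∈ Finset.Icc 1 n, rr k * (ρ (n - k) - ρ n) := by
        rw [hsecond] at *
        exact add_le_add hfirst le_rfl
end
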